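/- Let f be a Rademacher random multiplicative function. For a single prime p with p ≥ 100(1+max{α²,β²}) and reals α,β ≥ 0, σ with |σ| ≤ 1/log p, t₁, t₂, one has E[|1 + f(p)p^{−(1/2+σ+it₁)}|^{2α} |1 + f(p)p^{−(1/2+σ+it₂)}|^{2β}] = exp( (α² + β² + (α²−α)cos(2t₁ log p) + (β²−β)cos(2t₂ log p) + 2αβ(cos((t₁+t₂)log p) + cos((t₁−t₂)log p)))/p^{1+2σ} + O(max{α,β,α³,β³}/p^{3/2+3σ}) ). -/

import Mathlib

open MeasureTheory

/-- `ε` is a Rademacher random variable: it takes the values `±1` with probability `1/2`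
each. -/
def IsRademacherRV {Ω : Type*} [MeasurableSpace Ω] (μ : Measure Ω) (ε : Ω → ℝ) : Prop :=
  Measurable ε ∧ μ {ω | ε ω = 1} = 1 / 2 ∧ μ {ω | ε ω = -1} = 1 / 2

open scoped ENNReal

private lemma mono_aux {f f' : ℝ → ℝ} (hd : ∀ x, HasDerivAt f (f' x) x)
    (h0 : ∀ x, 0 < x → 0 ≤ f' x) {x : ℝ} (hx : 0 ≤ x) : f 0 ≤ f x := by
  have hm : MonotoneOn f (Set.Ici 0) := by
    apply monotoneOn_of_hasDerivWithinAt_nonneg (convex_Ici 0)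
      (fun y _ => (hd y).continuousAt.continuousWithinAt)
      (fun y _ => (hd y).hasDerivWithinAt)
    rw [interior_Ici]
    exact fun y hy => h0 y hy
  exact hm (Set.self_mem_Ici) hx hx

private lemma sinh_le_mul_cosh {x : ℝ} (hx : 0 ≤ x) : Real.sinh x ≤ x * Real.cosh x := by
  have hd : ∀ y : ℝ, HasDerivAt (fun z => z * Real.cosh z - Real.sinh z) (y * Real.sinh y) y := by
    intro y
    have h := ((hasDerivAt_id y).fun_mul (Real.hasDerivAt_cosh y)).fun_sub (Real.hasDerivAt_sinh y)
    refine h.congr_deriv ?_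
    simp [mul_comm]
  have := mono_aux hd (fun y hy => mul_nonneg hy.le (Real.sinh_nonneg_iff.2 hy.le)) hx
  simpa using this

private lemma mul_cosh_le_sinh {x : ℝ} (hx : 0 ≤ x) :
    (x - x ^ 3 / 3) * Real.cosh x ≤ Real.sinh x := by
  have hd : ∀ y : ℝ, HasDerivAt (fun z => Real.sinh z - (z - z ^ 3 / 3) * Real.cosh z)
      (y ^ 2 * Real.cosh y - (y - y ^ 3 / 3) * Real.sinh y) y := by
    intro y
    have h1 : HasDerivAt (fun z : ℝ => z - z ^ 3 / 3) (1 - 3 * y ^ 2 / 3) y := by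
      simpa using ((hasDerivAt_id' y).fun_sub ((hasDerivAt_pow 3 y).div_const 3))
    have h := (Real.hasDerivAt_sinh y).fun_sub (h1.fun_mul (Real.hasDerivAt_cosh y))
    refine h.congr_deriv ?_
    ring
  have h0 : ∀ y : ℝ, 0 < y → 0 ≤ y ^ 2 * Real.cosh y - (y - y ^ 3 / 3) * Real.sinh y := by
    intro y hy
    have h1 : (y - y ^ 3 / 3) * Real.sinh y ≤ y * Real.sinh y := by
      apply mul_le_mul_of_nonneg_right _ (Real.sinh_nonneg_iff.2 hy.le)
      nlinarith [pow_pos hy 3]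
    have h2 : y * Real.sinh y ≤ y * (y * Real.cosh y) :=
      mul_le_mul_of_nonneg_left (sinh_le_mul_cosh hy.le) hy.le
    nlinarith
  have := mono_aux hd h0 hx
  simpa using this

private lemma logcosh_le {x : ℝ} (hx : 0 ≤ x) : Real.log (Real.cosh x) ≤ x ^ 2 / 2 := by
  have hd : ∀ y : ℝ, HasDerivAt (fun z => z ^ 2 / 2 - Real.log (Real.cosh z))
      (y - Real.sinh y / Real.cosh y) y := by
    intro y
    have h1 : HasDerivAt (fun z => Real.log (Real.cosh z)) (Real.sinh y / Real.cosh y) y := by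
      simpa using (Real.hasDerivAt_cosh y).log (Real.cosh_pos y).ne'
    have h := ((hasDerivAt_pow 2 y).div_const 2).fun_sub h1
    refine h.congr_deriv ?_
    push_cast
    ring
  have h0 : ∀ y : ℝ, 0 < y → 0 ≤ y - Real.sinh y / Real.cosh y := by
    intro y hy
    rw [sub_nonneg, div_le_iff₀ (Real.cosh_pos y)]
    exact sinh_le_mul_cosh hy.le
  have := mono_aux hd h0 hx
  simp only [Real.cosh_zero, Real.log_one] at this
  linarith [this]

private lemma logcosh_ge {x : ℝ} (hx : 0 ≤ x) :
    x ^ 2 / 2 - x ^ 4 / 12 ≤ Real.log (Real.cosh x) := by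
  have hd : ∀ y : ℝ, HasDerivAt
      (fun z => Real.log (Real.cosh z) - z ^ 2 / 2 + z ^ 4 / 12)
      (Real.sinh y / Real.cosh y - y + y ^ 3 / 3) y := by
    intro y
    have h1 : HasDerivAt (fun z => Real.log (Real.cosh z)) (Real.sinh y / Real.cosh y) y := by
      simpa using (Real.hasDerivAt_cosh y).log (Real.cosh_pos y).ne'
    have h := (h1.fun_sub ((hasDerivAt_pow 2 y).div_const 2)).fun_add ((hasDerivAt_pow 4 y).div_const 12)
    refine h.congr_deriv ?_
    push_cast
    ring
  have h0 : ∀ y : ℝ, 0 < y → 0 ≤ Real.sinh y / Real.cosh y - y + y ^ 3 / 3 := by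
    intro y hy
    have h1 := mul_cosh_le_sinh hy.le
    have h2 : (y - y ^ 3 / 3) ≤ Real.sinh y / Real.cosh y := by
      rw [le_div_iff₀ (Real.cosh_pos y)]
      exact h1
    linarith
  have := mono_aux hd h0 hx
  simp only [Real.cosh_zero, Real.log_one] at this
  linarith [this]

lemma abs_logcosh_sub (x : ℝ) : |Real.log (Real.cosh x) - x ^ 2 / 2| ≤ x ^ 4 := by
  rw [← Real.cosh_abs]
  have h2 : |x| ^ 2 = x ^ 2 := sq_abs x
  have h4 : |x| ^ 4 = x ^ 4 := by rw [← abs_pow]; exact abs_of_nonneg (by positivity)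
  rw [abs_le]
  constructor
  · have := logcosh_ge (abs_nonneg x)
    rw [h2, h4] at this
    nlinarith [pow_nonneg (abs_nonneg x) 4, this]
  · have := logcosh_le (abs_nonneg x)
    rw [h2] at this
    nlinarith [pow_nonneg (abs_nonneg x) 4]

-- |log(1+x) - x| ≤ 2 x^2 for |x| ≤ 1/2
lemma log_taylor1 {x : ℝ} (h : |x| ≤ 1/2) : |Real.log (1+x) - x| ≤ 2 * x^2 := by
  have h1 : |(-x : ℝ)| < 1 := by rw [abs_neg]; linarith [abs_nonneg x]
  have := Real.abs_log_sub_add_sum_range_le h1 1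
  simp only [Finset.sum_range_one, pow_one, Nat.cast_zero, zero_add, div_one, sub_neg_eq_add,
    abs_neg] at this
  have hx2 : |x| ^ 2 / (1 - |x|) ≤ 2 * x ^ 2 := by
    rw [div_le_iff₀ (by linarith [abs_nonneg x] : (0:ℝ) < 1 - |x|)]
    have : |x| ^ 2 = x ^ 2 := sq_abs x
    nlinarith [sq_abs x, sq_nonneg x, abs_nonneg x]
  calc |Real.log (1+x) - x| = |(-x) + Real.log (1 + x)| := by
        rw [abs_sub_comm, ← abs_neg]; congr 1; ring
    _ ≤ |x| ^ (1+1) / (1 - |x|) := this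
    _ = |x| ^ 2 / (1 - |x|) := by norm_num
    _ ≤ 2 * x ^ 2 := hx2

-- |log(1+x) - x + x^2/2| ≤ 3 |x|^3 for |x| ≤ 33/65
lemma log_taylor2 {x : ℝ} (h : |x| ≤ 33/65) : |Real.log (1+x) - x + x^2/2| ≤ 3 * |x|^3 := by
  have h1 : |(-x : ℝ)| < 1 := by rw [abs_neg]; linarith [abs_nonneg x]
  have := Real.abs_log_sub_add_sum_range_le h1 2
  have hsum : (∑ i ∈ Finset.range 2, (-x) ^ (i + 1) / ((i:ℝ) + 1)) = -x + x^2/2 := by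
    simp [Finset.sum_range_succ]
    ring
  rw [hsum] at this
  have h2 : (1 : ℝ) - -x = 1 + x := by ring
  rw [h2, abs_neg] at this
  have hx3 : |x| ^ 3 / (1 - |x|) ≤ 3 * |x| ^ 3 := by
    rw [div_le_iff₀ (by linarith [abs_nonneg x] : (0:ℝ) < 1 - |x|)]
    nlinarith [pow_nonneg (abs_nonneg x) 3, abs_nonneg x]
  calc |Real.log (1+x) - x + x^2/2| = |(-x + x^2/2) + Real.log (1 + x)| := by
        congr 1; ring
    _ ≤ |x| ^ (2+1) / (1 - |x|) := this
    _ = |x| ^ 3 / (1 - |x|) := by norm_num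
    _ ≤ 3 * |x| ^ 3 := hx3

private lemma abs_half_add (a b : ℝ) : |(a+b)/2| ≤ (|a|+|b|)/2 := by
  rw [abs_div, abs_two]
  have := abs_add_le a b
  linarith

private lemma abs_add_five (a b c d e : ℝ) : |a+b+c+d+e| ≤ |a|+|b|+|c|+|d|+|e| := by
  calc |a+b+c+d+e| ≤ |a+b+c+d| + |e| := abs_add_le _ _
    _ ≤ |a+b+c| + |d| + |e| := by linarith [abs_add_le (a+b+c) d]
    _ ≤ |a+b| + |c| + |d| + |e| := by linarith [abs_add_le (a+b) c]
    _ ≤ |a|+|b|+|c|+|d|+|e| := by linarith [abs_add_le a b]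

private lemma ybound {r c : ℝ} (hr0 : 0 < r) (hr : r ≤ 3/11) (hc : |c| ≤ 1) :
    |2*r*c/(1+r^2)| ≤ 33/65 ∧ |2*r*c/(1+r^2)| ≤ 2*r := by
  have hq0 : (0:ℝ) < 1 + r^2 := by positivity
  have h1 : |2*r*c/(1+r^2)| = 2*r*|c|/(1+r^2) := by
    rw [abs_div, abs_of_pos hq0, abs_mul, abs_of_nonneg (by linarith : (0:ℝ) ≤ 2*r)]
  have h2 : 2*r*|c| ≤ 2*r := by
    have := mul_le_mul_of_nonneg_left hc (by linarith : (0:ℝ) ≤ 2*r)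
    linarith only [this]
  have h2' : 2*r*|c|/(1+r^2) ≤ 2*r/(1+r^2) := by
    apply div_le_div_of_nonneg_right h2 hq0.le |>.trans_eq rfl
  have h3 : 2*r/(1+r^2) ≤ 33/65 := by
    rw [div_le_iff₀ hq0]
    nlinarith only [mul_nonneg (by linarith : (0:ℝ) ≤ 3 - 11*r)
      (by linarith : (0:ℝ) ≤ 11 - 3*r), hr0, hr]
  have h4 : 2*r/(1+r^2) ≤ 2*r := by
    apply div_le_self (by linarith) (by nlinarith only [sq_nonneg r])
  rw [h1]
  exact ⟨by linarith, by linarith⟩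

private lemma logTm {y : ℝ} (h : |y| ≤ 33/65) :
    |Real.log (1-y) + y + y^2/2| ≤ 3*|y|^3 := by
  have := log_taylor2 (x := -y) (by rwa [abs_neg])
  rw [abs_neg] at this
  have h2 : 1 + -y = 1 - y := by ring
  rw [h2, neg_sq] at this
  calc |Real.log (1-y) + y + y^2/2| = |Real.log (1-y) - (-y) + y^2/2| := by ring_nf
    _ ≤ 3*|y|^3 := this

private lemma ycube {r y : ℝ} (hr0 : 0 < r) (h : |y| ≤ 2*r) : |y|^3 ≤ 8*r^3 := by
  calc |y|^3 ≤ (2*r)^3 := pow_le_pow_left₀ (abs_nonneg y) h 3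
    _ = 8*r^3 := by ring

private lemma logsum {r y : ℝ} (hr0 : 0 < r) (h1 : |y| ≤ 33/65) (h2 : |y| ≤ 2*r) :
    |Real.log (1+y) + Real.log (1-y) + y^2| ≤ 48*r^3 := by
  have a1 := log_taylor2 h1
  have a2 := logTm h1
  have a3 := ycube hr0 h2
  calc |Real.log (1+y) + Real.log (1-y) + y^2|
      = |(Real.log (1+y) - y + y^2/2) + (Real.log (1-y) + y + y^2/2)| := by ring_nf
    _ ≤ |Real.log (1+y) - y + y^2/2| + |Real.log (1-y) + y + y^2/2| := abs_add_le _ _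
    _ ≤ 3*|y|^3 + 3*|y|^3 := by linarith only [a1, a2]
    _ ≤ 48*r^3 := by linarith only [a3]

private lemma logdiff {r y : ℝ} (hr0 : 0 < r) (h1 : |y| ≤ 33/65) (h2 : |y| ≤ 2*r) :
    |Real.log (1+y) - Real.log (1-y) - 2*y| ≤ 48*r^3 := by
  have a1 := log_taylor2 h1
  have a2 := logTm h1
  have a3 := ycube hr0 h2
  calc |Real.log (1+y) - Real.log (1-y) - 2*y|
      = |(Real.log (1+y) - y + y^2/2) - (Real.log (1-y) + y + y^2/2)| := by ring_nf
    _ ≤ |Real.log (1+y) - y + y^2/2| + |Real.log (1-y) + y + y^2/2| := abs_sub _ _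
    _ ≤ 3*|y|^3 + 3*|y|^3 := by linarith only [a1, a2]
    _ ≤ 48*r^3 := by linarith only [a3]

private lemma logdiff_abs {r y : ℝ} (hr0 : 0 < r) (hr : r ≤ 3/11)
    (h1 : |y| ≤ 33/65) (h2 : |y| ≤ 2*r) :
    |Real.log (1+y) - Real.log (1-y)| ≤ 8*r := by
  have a1 := logdiff hr0 h1 h2
  have hb : |Real.log (1+y) - Real.log (1-y)| ≤ 2*|y| + 48*r^3 := by
    calc |Real.log (1+y) - Real.log (1-y)|
        = |(Real.log (1+y) - Real.log (1-y) - 2*y) + 2*y| := by ring_nf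
      _ ≤ |Real.log (1+y) - Real.log (1-y) - 2*y| + |2*y| := abs_add_le _ _
      _ ≤ 48*r^3 + 2*|y| := by
          rw [abs_mul, abs_two]
          linarith only [a1]
      _ = 2*|y| + 48*r^3 := by ring
  have hrr : r*r ≤ (3/11)*r := mul_le_mul_of_nonneg_right hr hr0.le
  have hr3 : 48*r^3 ≤ 4*r := by nlinarith only [hrr, hr0, hr]
  linarith only [hb, hr3, h2]

private lemma combine {r α β M : ℝ} (hα : 0 ≤ α) (hβ : 0 ≤ β) (hr0 : 0 < r)
    (hr : r ≤ 3/11) (hrα : r*α ≤ 3/11) (hrβ : r*β ≤ 3/11)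
    (hMα : α ≤ M) (hMβ : β ≤ M) (hMα3 : α^3 ≤ M) (hMβ3 : β^3 ≤ M) :
    2*(α+β)*r^4 + 24*(α+β)*r^3 + 256*r^4*(α+β)^4 + 72*(α+β)^2*r^4
      + 6*r^4*(α^2+α+β^2+β+2*α*β) ≤ 10000*M*r^3 := by
  have hM0 : 0 ≤ M := le_trans hα hMα
  have hr3 : (0:ℝ) < r^3 := by positivity
  have habr : r*(α+β) ≤ 6/11 := by linarith only [hrα, hrβ]
  have h8M : (α+β)^3 ≤ 8*M := by
    rcases le_total α β with h|h
    · calc (α+β)^3 ≤ (2*β)^3 := pow_le_pow_left₀ (by linarith) (by linarith) 3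
        _ = 8*β^3 := by ring
        _ ≤ 8*M := by linarith only [hMβ3]
    · calc (α+β)^3 ≤ (2*α)^3 := pow_le_pow_left₀ (by linarith) (by linarith) 3
        _ = 8*α^3 := by ring
        _ ≤ 8*M := by linarith only [hMα3]
  have habM : α+β ≤ 2*M := by linarith only [hMα, hMβ]
  have hab0 : 0 ≤ α+β := by linarith only [hα, hβ]
  have f1 : 2*(α+β)*r^4 ≤ 2*M*r^3 := by
    have : 2*(α+β)*r^4 = 2*r*((α+β)*r^3) := by ring
    rw [this]
    have g1 : (α+β)*r^3 ≤ 2*M*r^3 := mul_le_mul_of_nonneg_right habM hr3.le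
    have g2 : 0 ≤ (α+β)*r^3 := mul_nonneg hab0 hr3.le
    nlinarith only [g1, g2, hr0, hr]
  have f2 : 24*(α+β)*r^3 ≤ 48*M*r^3 := by
    have g1 : (α+β)*r^3 ≤ 2*M*r^3 := mul_le_mul_of_nonneg_right habM hr3.le
    linarith only [g1]
  have f3 : 256*r^4*(α+β)^4 ≤ 1200*M*r^3 := by
    have h1 : (α+β)^3*r^3 ≤ (8*M)*r^3 := mul_le_mul_of_nonneg_right h8M hr3.le
    have h2 : 0 ≤ (α+β)^3*r^3 := mul_nonneg (by positivity) hr3.le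
    have h3 : 256*r^4*(α+β)^4 = 256*(r*(α+β))*((α+β)^3*r^3) := by ring
    rw [h3]
    nlinarith only [h1, h2, habr, hM0, hr3, mul_nonneg hr0.le hab0]
  have f4 : 72*(α+β)^2*r^4 ≤ 80*M*r^3 := by
    have h1 : (α+β)*r^3 ≤ (2*M)*r^3 := mul_le_mul_of_nonneg_right habM hr3.le
    have h2 : 0 ≤ (α+β)*r^3 := mul_nonneg hab0 hr3.le
    have h3 : 72*(α+β)^2*r^4 = 72*(r*(α+β))*((α+β)*r^3) := by ring
    rw [h3]
    nlinarith only [h1, h2, habr, hM0, hr3, mul_nonneg hr0.le hab0]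
  have f5 : 6*r^4*(α^2+α+β^2+β+2*α*β) ≤ 36*M*r^3 := by
    have k1 : α*r^3 ≤ M*r^3 := mul_le_mul_of_nonneg_right hMα hr3.le
    have k2 : β*r^3 ≤ M*r^3 := mul_le_mul_of_nonneg_right hMβ hr3.le
    have k3 : 0 ≤ α*r^3 := mul_nonneg hα hr3.le
    have k4 : 0 ≤ β*r^3 := mul_nonneg hβ hr3.le
    have hA1 : r^4*α^2 ≤ M*r^3 := by
      have : r^4*α^2 = (r*α)*(α*r^3) := by ring
      rw [this]
      nlinarith only [k1, k3, hrα, mul_nonneg hr0.le hα]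
    have hA2 : r^4*α ≤ M*r^3 := by
      have : r^4*α = r*(α*r^3) := by ring
      rw [this]
      nlinarith only [k1, k3, hr0, hr]
    have hB1 : r^4*β^2 ≤ M*r^3 := by
      have : r^4*β^2 = (r*β)*(β*r^3) := by ring
      rw [this]
      nlinarith only [k2, k4, hrβ, mul_nonneg hr0.le hβ]
    have hB2 : r^4*β ≤ M*r^3 := by
      have : r^4*β = r*(β*r^3) := by ring
      rw [this]
      nlinarith only [k2, k4, hr0, hr]
    have hAB : r^4*(α*β) ≤ M*r^3 := by
      have : r^4*(α*β) = (r*α)*(β*r^3) := by ring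
      rw [this]
      nlinarith only [k2, k4, hrα, mul_nonneg hr0.le hα]
    nlinarith only [hA1, hA2, hB1, hB2, hAB]
  nlinarith only [f1, f2, f3, f4, f5, hM0, hr3]

set_option maxHeartbeats 1000000 in
lemma core {r c₁ c₂ α β : ℝ} (hα : 0 ≤ α) (hβ : 0 ≤ β)
    (hc₁ : |c₁| ≤ 1) (hc₂ : |c₂| ≤ 1) (hr0 : 0 < r) (hr : r ≤ 3/11)
    (hrα : r * α ≤ 3/11) (hrβ : r * β ≤ 3/11) :
    |Real.log (((1+2*r*c₁+r^2) ^ α * (1+2*r*c₂+r^2) ^ β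
        + (1-2*r*c₁+r^2) ^ α * (1-2*r*c₂+r^2) ^ β) / 2)
      - r^2 * (α+β+2*(α^2-α)*c₁^2+2*(β^2-β)*c₂^2+4*α*β*c₁*c₂)|
    ≤ 10000 * max (max α β) (max (α^3) (β^3)) * r^3 := by
  obtain ⟨M, hM⟩ : ∃ M, M = max (max α β) (max (α^3) (β^3)) := ⟨_, rfl⟩
  rw [← hM]
  have hMα : α ≤ M := hM ▸ le_trans (le_max_left _ _) (le_max_left _ _)
  have hMβ : β ≤ M := hM ▸ le_trans (le_max_right _ _) (le_max_left _ _)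
  have hMα3 : α^3 ≤ M := hM ▸ le_trans (le_max_left _ _) (le_max_right _ _)
  have hMβ3 : β^3 ≤ M := hM ▸ le_trans (le_max_right _ _) (le_max_right _ _)
  have hq0 : (0:ℝ) < 1 + r^2 := by positivity
  obtain ⟨y₁, hy₁⟩ : ∃ y, y = 2*r*c₁/(1+r^2) := ⟨_, rfl⟩
  obtain ⟨y₂, hy₂⟩ : ∃ y, y = 2*r*c₂/(1+r^2) := ⟨_, rfl⟩
  obtain ⟨hy1a, hy1b⟩ : |y₁| ≤ 33/65 ∧ |y₁| ≤ 2*r := hy₁ ▸ ybound hr0 hr hc₁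
  obtain ⟨hy2a, hy2b⟩ : |y₂| ≤ 33/65 ∧ |y₂| ≤ 2*r := hy₂ ▸ ybound hr0 hr hc₂
  have hy1pos : 0 < 1 + y₁ := by have := abs_le.1 hy1a; linarith only [this.1]
  have hy1neg : 0 < 1 - y₁ := by have := abs_le.1 hy1a; linarith only [this.2]
  have hy2pos : 0 < 1 + y₂ := by have := abs_le.1 hy2a; linarith only [this.1]
  have hy2neg : 0 < 1 - y₂ := by have := abs_le.1 hy2a; linarith only [this.2]
  have hfac1p : 1+2*r*c₁+r^2 = (1+r^2)*(1+y₁) := by rw [hy₁]; field_simp; ring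
  have hfac1m : 1-2*r*c₁+r^2 = (1+r^2)*(1-y₁) := by rw [hy₁]; field_simp; ring
  have hfac2p : 1+2*r*c₂+r^2 = (1+r^2)*(1+y₂) := by rw [hy₂]; field_simp; ring
  have hfac2m : 1-2*r*c₂+r^2 = (1+r^2)*(1-y₂) := by rw [hy₂]; field_simp; ring
  obtain ⟨Lq, hLq⟩ : ∃ L, L = Real.log (1+r^2) := ⟨_, rfl⟩
  obtain ⟨Lp₁, hLp₁⟩ : ∃ L, L = Real.log (1+y₁) := ⟨_, rfl⟩
  obtain ⟨Lm₁, hLm₁⟩ : ∃ L, L = Real.log (1-y₁) := ⟨_, rfl⟩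
  obtain ⟨Lp₂, hLp₂⟩ : ∃ L, L = Real.log (1+y₂) := ⟨_, rfl⟩
  obtain ⟨Lm₂, hLm₂⟩ : ∃ L, L = Real.log (1-y₂) := ⟨_, rfl⟩
  obtain ⟨A, hA⟩ : ∃ A, A = (Lq + Lp₁)*α + (Lq + Lp₂)*β := ⟨_, rfl⟩
  obtain ⟨B, hB⟩ : ∃ B, B = (Lq + Lm₁)*α + (Lq + Lm₂)*β := ⟨_, rfl⟩
  obtain ⟨d, hd⟩ : ∃ d, d = (α*(Lp₁-Lm₁)+β*(Lp₂-Lm₂))/2 := ⟨_, rfl⟩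
  obtain ⟨d₁, hd₁⟩ : ∃ d, d = α*y₁ + β*y₂ := ⟨_, rfl⟩
  have hPp : (1+2*r*c₁+r^2) ^ α * (1+2*r*c₂+r^2) ^ β = Real.exp A := by
    rw [hfac1p, hfac2p, Real.rpow_def_of_pos (by positivity),
      Real.rpow_def_of_pos (by positivity), ← Real.exp_add,
      Real.log_mul hq0.ne' hy1pos.ne', Real.log_mul hq0.ne' hy2pos.ne',
      hA, hLq, hLp₁, hLp₂]
  have hPm : (1-2*r*c₁+r^2) ^ α * (1-2*r*c₂+r^2) ^ β = Real.exp B := by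
    rw [hfac1m, hfac2m, Real.rpow_def_of_pos (by positivity),
      Real.rpow_def_of_pos (by positivity), ← Real.exp_add,
      Real.log_mul hq0.ne' hy1neg.ne', Real.log_mul hq0.ne' hy2neg.ne',
      hB, hLq, hLm₁, hLm₂]
  have hsplit : (Real.exp A + Real.exp B)/2
      = Real.exp ((A+B)/2) * Real.cosh ((A-B)/2) := by
    have e1 : Real.exp ((A+B)/2) * Real.exp ((A-B)/2) = Real.exp A := by
      rw [← Real.exp_add]; congr 1; ring
    have e2 : Real.exp ((A+B)/2) * Real.exp (-((A-B)/2)) = Real.exp B := by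
      rw [← Real.exp_add]; congr 1; ring
    rw [Real.cosh_eq]
    calc (Real.exp A + Real.exp B)/2
        = (Real.exp ((A+B)/2) * Real.exp ((A-B)/2)
            + Real.exp ((A+B)/2) * Real.exp (-((A-B)/2)))/2 := by rw [e1, e2]
      _ = _ := by ring
  have hABd : (A-B)/2 = d := by rw [hA, hB, hd]; ring
  have key : Real.log (((1+2*r*c₁+r^2) ^ α * (1+2*r*c₂+r^2) ^ β
      + (1-2*r*c₁+r^2) ^ α * (1-2*r*c₂+r^2) ^ β) / 2)
      = (A+B)/2 + Real.log (Real.cosh d) := by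
    rw [hPp, hPm, hsplit, hABd, Real.log_mul (Real.exp_ne_zero _) (Real.cosh_pos _).ne',
      Real.log_exp]
  have hS₁ : |Lp₁ + Lm₁ + y₁^2| ≤ 48*r^3 := by
    rw [hLp₁, hLm₁]; exact logsum hr0 hy1a hy1b
  have hS₂ : |Lp₂ + Lm₂ + y₂^2| ≤ 48*r^3 := by
    rw [hLp₂, hLm₂]; exact logsum hr0 hy2a hy2b
  have hD₁ : |Lp₁ - Lm₁ - 2*y₁| ≤ 48*r^3 := by
    rw [hLp₁, hLm₁]; exact logdiff hr0 hy1a hy1b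
  have hD₂ : |Lp₂ - Lm₂ - 2*y₂| ≤ 48*r^3 := by
    rw [hLp₂, hLm₂]; exact logdiff hr0 hy2a hy2b
  have hDa₁ : |Lp₁ - Lm₁| ≤ 8*r := by
    rw [hLp₁, hLm₁]; exact logdiff_abs hr0 hr hy1a hy1b
  have hDa₂ : |Lp₂ - Lm₂| ≤ 8*r := by
    rw [hLp₂, hLm₂]; exact logdiff_abs hr0 hr hy2a hy2b
  have hlogq : |Lq - r^2| ≤ 2*r^4 := by
    have hrr : r*r ≤ (3/11)*r := mul_le_mul_of_nonneg_right hr hr0.le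
    have h0 : |r^2| ≤ 1/2 := by
      rw [abs_of_nonneg (sq_nonneg r)]
      nlinarith only [hrr, hr0, hr]
    calc |Lq - r^2| ≤ 2*(r^2)^2 := by rw [hLq]; exact log_taylor1 h0
      _ = 2*r^4 := by ring
  have hd_close : |d - d₁| ≤ 24*(α+β)*r^3 := by
    have e : d - d₁ = (α*(Lp₁-Lm₁-2*y₁) + β*(Lp₂-Lm₂-2*y₂))/2 := by
      rw [hd, hd₁]; ring
    rw [e]
    have t1 : |α*(Lp₁-Lm₁-2*y₁)| ≤ α*(48*r^3) := by
      rw [abs_mul, abs_of_nonneg hα]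
      exact mul_le_mul_of_nonneg_left hD₁ hα
    have t2 : |β*(Lp₂-Lm₂-2*y₂)| ≤ β*(48*r^3) := by
      rw [abs_mul, abs_of_nonneg hβ]
      exact mul_le_mul_of_nonneg_left hD₂ hβ
    calc |(α*(Lp₁-Lm₁-2*y₁) + β*(Lp₂-Lm₂-2*y₂))/2|
        ≤ (|α*(Lp₁-Lm₁-2*y₁)| + |β*(Lp₂-Lm₂-2*y₂)|)/2 := abs_half_add _ _
      _ ≤ (α*(48*r^3) + β*(48*r^3))/2 := by linarith only [t1, t2]
      _ = 24*(α+β)*r^3 := by ring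
  have hd_abs : |d| ≤ 4*r*(α+β) := by
    rw [hd]
    have t1 : |α*(Lp₁-Lm₁)| ≤ α*(8*r) := by
      rw [abs_mul, abs_of_nonneg hα]; exact mul_le_mul_of_nonneg_left hDa₁ hα
    have t2 : |β*(Lp₂-Lm₂)| ≤ β*(8*r) := by
      rw [abs_mul, abs_of_nonneg hβ]; exact mul_le_mul_of_nonneg_left hDa₂ hβ
    calc |(α*(Lp₁-Lm₁)+β*(Lp₂-Lm₂))/2|
        ≤ (|α*(Lp₁-Lm₁)| + |β*(Lp₂-Lm₂)|)/2 := abs_half_add _ _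
      _ ≤ (α*(8*r) + β*(8*r))/2 := by linarith only [t1, t2]
      _ = 4*r*(α+β) := by ring
  have hd1_abs : |d₁| ≤ 2*r*(α+β) := by
    rw [hd₁]
    have t1 : |α*y₁| ≤ α*(2*r) := by
      rw [abs_mul, abs_of_nonneg hα]; exact mul_le_mul_of_nonneg_left hy1b hα
    have t2 : |β*y₂| ≤ β*(2*r) := by
      rw [abs_mul, abs_of_nonneg hβ]; exact mul_le_mul_of_nonneg_left hy2b hβ
    calc |α*y₁+β*y₂| ≤ |α*y₁| + |β*y₂| := abs_add_le _ _
      _ ≤ α*(2*r) + β*(2*r) := by linarith only [t1, t2]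
      _ = 2*r*(α+β) := by ring
  have decomp : (A+B)/2 + Real.log (Real.cosh d)
      - r^2 * (α+β+2*(α^2-α)*c₁^2+2*(β^2-β)*c₂^2+4*α*β*c₁*c₂)
      = (α+β)*(Lq - r^2)
      + (α*(Lp₁+Lm₁+y₁^2) + β*(Lp₂+Lm₂+y₂^2))/2
      + (Real.log (Real.cosh d) - d^2/2)
      + (d^2 - d₁^2)/2
      + 2*r^2*((α^2-α)*c₁^2+(β^2-β)*c₂^2+2*α*β*c₁*c₂)*(1/(1+r^2)^2 - 1) := by
    rw [hA, hB, hd₁, hy₁, hy₂]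
    field_simp
    ring
  rw [key, decomp]
  have e1b : |(α+β)*(Lq - r^2)| ≤ 2*(α+β)*r^4 := by
    rw [abs_mul, abs_of_nonneg (by linarith only [hα, hβ] : (0:ℝ) ≤ α+β)]
    calc (α+β)*|Lq - r^2| ≤ (α+β)*(2*r^4) :=
        mul_le_mul_of_nonneg_left hlogq (by linarith only [hα, hβ])
      _ = 2*(α+β)*r^4 := by ring
  have e2b : |(α*(Lp₁+Lm₁+y₁^2) + β*(Lp₂+Lm₂+y₂^2))/2| ≤ 24*(α+β)*r^3 := by
    have t1 : |α*(Lp₁+Lm₁+y₁^2)| ≤ α*(48*r^3) := by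
      rw [abs_mul, abs_of_nonneg hα]
      exact mul_le_mul_of_nonneg_left hS₁ hα
    have t2 : |β*(Lp₂+Lm₂+y₂^2)| ≤ β*(48*r^3) := by
      rw [abs_mul, abs_of_nonneg hβ]
      exact mul_le_mul_of_nonneg_left hS₂ hβ
    calc |(α*(Lp₁+Lm₁+y₁^2) + β*(Lp₂+Lm₂+y₂^2))/2|
        ≤ (|α*(Lp₁+Lm₁+y₁^2)| + |β*(Lp₂+Lm₂+y₂^2)|)/2 := abs_half_add _ _
      _ ≤ (α*(48*r^3) + β*(48*r^3))/2 := by linarith only [t1, t2]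
      _ = 24*(α+β)*r^3 := by ring
  have e3b : |Real.log (Real.cosh d) - d^2/2| ≤ 256*r^4*(α+β)^4 := by
    calc |Real.log (Real.cosh d) - d^2/2| ≤ d^4 := abs_logcosh_sub d
      _ = |d|^4 := by rw [← abs_pow, abs_of_nonneg (by positivity : (0:ℝ) ≤ d^4)]
      _ ≤ (4*r*(α+β))^4 := pow_le_pow_left₀ (abs_nonneg d) hd_abs 4
      _ = 256*r^4*(α+β)^4 := by ring
  have e4b : |(d^2 - d₁^2)/2| ≤ 72*(α+β)^2*r^4 := by
    have h1 : |d^2 - d₁^2| = |d - d₁| * |d + d₁| := by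
      rw [← abs_mul]; congr 1; ring
    have h2 : |d + d₁| ≤ 6*r*(α+β) := by
      calc |d + d₁| ≤ |d| + |d₁| := abs_add_le _ _
        _ ≤ 6*r*(α+β) := by linarith only [hd_abs, hd1_abs]
    calc |(d^2 - d₁^2)/2| = |d^2-d₁^2|/2 := by rw [abs_div, abs_two]
      _ = |d - d₁| * |d + d₁| / 2 := by rw [h1]
      _ ≤ (24*(α+β)*r^3) * (6*r*(α+β)) / 2 := by
          have := mul_le_mul hd_close h2 (abs_nonneg _)
            (by positivity : (0:ℝ) ≤ 24*(α+β)*r^3)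
          linarith only [this]
      _ = 72*(α+β)^2*r^4 := by ring
  have e5b : |2*r^2*((α^2-α)*c₁^2+(β^2-β)*c₂^2+2*α*β*c₁*c₂)*(1/(1+r^2)^2 - 1)|
      ≤ 6*r^4*(α^2+α+β^2+β+2*α*β) := by
    have hc₁' : c₁^2 ≤ 1 := by nlinarith only [sq_abs c₁, abs_nonneg c₁, hc₁]
    have hc₂' : c₂^2 ≤ 1 := by nlinarith only [sq_abs c₂, abs_nonneg c₂, hc₂]
    have hW : |(α^2-α)*c₁^2+(β^2-β)*c₂^2+2*α*β*c₁*c₂| ≤ α^2+α+β^2+β+2*α*β := by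
      have b1 : |(α^2-α)*c₁^2| ≤ α^2+α := by
        rw [abs_mul, abs_of_nonneg (sq_nonneg c₁)]
        have h2 : |α^2-α| ≤ α^2+α := by
          rw [abs_le]; constructor <;> nlinarith only [hα, sq_nonneg α]
        nlinarith only [h2, hc₁', sq_nonneg c₁, abs_nonneg (α^2-α)]
      have b2 : |(β^2-β)*c₂^2| ≤ β^2+β := by
        rw [abs_mul, abs_of_nonneg (sq_nonneg c₂)]
        have h2 : |β^2-β| ≤ β^2+β := by
          rw [abs_le]; constructor <;> nlinarith only [hβ, sq_nonneg β]
        nlinarith only [h2, hc₂', sq_nonneg c₂, abs_nonneg (β^2-β)]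
      have b3 : |2*α*β*c₁*c₂| ≤ 2*α*β := by
        rw [abs_mul, abs_mul, abs_mul, abs_mul, abs_two, abs_of_nonneg hα, abs_of_nonneg hβ]
        have hcc : |c₁| * |c₂| ≤ 1 := mul_le_one₀ hc₁ (abs_nonneg c₂) hc₂
        nlinarith only [hcc, abs_nonneg c₁, abs_nonneg c₂, mul_nonneg hα hβ]
      calc |(α^2-α)*c₁^2+(β^2-β)*c₂^2+2*α*β*c₁*c₂|
          ≤ |(α^2-α)*c₁^2| + |(β^2-β)*c₂^2| + |2*α*β*c₁*c₂| := abs_add_three _ _ _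
        _ ≤ α^2+α+β^2+β+2*α*β := by linarith only [b1, b2, b3]
    have hqq : |1/(1+r^2)^2 - 1| ≤ 3*r^2 := by
      have h1 : 1/(1+r^2)^2 ≤ 1 := by
        rw [div_le_one (by positivity)]
        nlinarith only [sq_nonneg r, sq_nonneg (r^2)]
      have h2 : (0:ℝ) < 1/(1+r^2)^2 := by positivity
      rw [abs_of_nonpos (by linarith only [h1])]
      have hrr : r*r ≤ (3/11)*r := mul_le_mul_of_nonneg_right hr hr0.le
      have h4 : (1+r^2)^2 - 1 ≤ 3*r^2 := by
        nlinarith only [hrr, hr0, hr, sq_nonneg r]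
      have h5 : -(1/(1+r^2)^2 - 1) = ((1+r^2)^2-1)/(1+r^2)^2 := by field_simp; ring
      rw [h5]
      calc ((1+r^2)^2-1)/(1+r^2)^2 ≤ (1+r^2)^2 - 1 := by
            apply div_le_self (by nlinarith only [sq_nonneg r, sq_nonneg (r^2)])
              (by nlinarith only [sq_nonneg r, sq_nonneg (r^2)])
        _ ≤ 3*r^2 := h4
    calc |2*r^2*((α^2-α)*c₁^2+(β^2-β)*c₂^2+2*α*β*c₁*c₂)*(1/(1+r^2)^2 - 1)|
        = 2*r^2 * |(α^2-α)*c₁^2+(β^2-β)*c₂^2+2*α*β*c₁*c₂| * |1/(1+r^2)^2-1| := by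
          rw [abs_mul, abs_mul, abs_mul, abs_two, abs_of_nonneg (sq_nonneg r)]
      _ ≤ 2*r^2 * (α^2+α+β^2+β+2*α*β) * (3*r^2) := by
          apply mul_le_mul _ hqq (abs_nonneg _) (by positivity)
          exact mul_le_mul_of_nonneg_left hW (by positivity)
      _ = 6*r^4*(α^2+α+β^2+β+2*α*β) := by ring
  have final := combine hα hβ hr0 hr hrα hrβ hMα hMβ hMα3 hMβ3
  calc |(α+β)*(Lq - r^2)
      + (α*(Lp₁+Lm₁+y₁^2) + β*(Lp₂+Lm₂+y₂^2))/2
      + (Real.log (Real.cosh d) - d^2/2)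
      + (d^2 - d₁^2)/2
      + 2*r^2*((α^2-α)*c₁^2+(β^2-β)*c₂^2+2*α*β*c₁*c₂)*(1/(1+r^2)^2 - 1)|
      ≤ |(α+β)*(Lq - r^2)|
      + |(α*(Lp₁+Lm₁+y₁^2) + β*(Lp₂+Lm₂+y₂^2))/2|
      + |Real.log (Real.cosh d) - d^2/2|
      + |(d^2 - d₁^2)/2|
      + |2*r^2*((α^2-α)*c₁^2+(β^2-β)*c₂^2+2*α*β*c₁*c₂)*(1/(1+r^2)^2 - 1)| :=
        abs_add_five _ _ _ _ _
    _ ≤ 10000 * M * r^3 := by linarith only [e1b, e2b, e3b, e4b, e5b, final]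

private lemma norm_term {p : ℕ} (hp : 0 < p) (σ t e γ : ℝ) (he : e^2 = 1) :
    ‖1 + (e:ℂ) * (p:ℂ) ^ (-(((1/2 + σ : ℝ):ℂ) + Complex.I * (t:ℂ)))‖ ^ (2*γ)
    = (1 + 2*e*((p:ℝ) ^ (-(1/2+σ) : ℝ))*Real.cos (t*Real.log p)
        + ((p:ℝ) ^ (-(1/2+σ) : ℝ))^2) ^ γ := by
  have hp0 : (0:ℝ) < (p:ℝ) := by exact_mod_cast hp
  have hpc : (p:ℂ) ≠ 0 := by exact_mod_cast hp0.ne'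
  set L : ℝ := Real.log p with hL
  set R : ℝ := (p:ℝ) ^ (-(1/2+σ) : ℝ) with hR
  have hR0 : 0 < R := Real.rpow_pos_of_pos hp0 _
  set z : ℂ := (p:ℂ) ^ (-(((1/2 + σ : ℝ):ℂ) + Complex.I * (t:ℂ))) with hz
  have hzre : z.re = R * Real.cos (-(t*L)) ∧ z.im = R * Real.sin (-(t*L)) := by
    have h1 : z = Complex.exp ((Complex.log (p:ℂ)) * (-(((1/2 + σ : ℝ):ℂ) + Complex.I * (t:ℂ)))) := by
      rw [hz, Complex.cpow_def_of_ne_zero hpc]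
    have h2 : Complex.log (p:ℂ) = (L:ℂ) := by rw [hL, Complex.natCast_log]
    have h3 : (Complex.log (p:ℂ)) * (-(((1/2 + σ : ℝ):ℂ) + Complex.I * (t:ℂ)))
        = ((-(1/2+σ)*L : ℝ):ℂ) + ((-(t*L) : ℝ):ℂ) * Complex.I := by
      rw [h2]; push_cast; ring
    rw [h1, h3]
    constructor
    · rw [Complex.exp_re]
      simp only [Complex.add_re, Complex.ofReal_re, Complex.mul_re, Complex.I_re,
        Complex.I_im, Complex.ofReal_im, Complex.add_im, Complex.mul_im]
      rw [hR, Real.rpow_def_of_pos hp0, ← hL]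
      ring_nf
    · rw [Complex.exp_im]
      simp only [Complex.add_re, Complex.ofReal_re, Complex.mul_re, Complex.I_re,
        Complex.I_im, Complex.ofReal_im, Complex.add_im, Complex.mul_im]
      rw [hR, Real.rpow_def_of_pos hp0, ← hL]
      ring_nf
  have hnormsq : ‖1 + (e:ℂ) * z‖^(2:ℕ) = 1 + 2*e*R*Real.cos (t*L) + R^2 := by
    rw [Complex.sq_norm,
      Complex.normSq_apply]
    simp only [Complex.add_re, Complex.add_im, Complex.one_re, Complex.one_im,
      Complex.mul_re, Complex.mul_im, Complex.ofReal_re, Complex.ofReal_im]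
    rw [hzre.1, hzre.2, Real.cos_neg, Real.sin_neg]
    have hsc := Real.sin_sq_add_cos_sq (t*L)
    linear_combination (e^2*R^2) * hsc + R^2 * he
  have hnn : (0:ℝ) ≤ ‖1 + (e:ℂ) * z‖ := norm_nonneg _
  calc ‖1 + (e:ℂ) * z‖ ^ (2*γ) = (‖1 + (e:ℂ) * z‖ ^ (2:ℕ)) ^ γ := by
        rw [← Real.rpow_natCast ‖1 + (e:ℂ) * z‖ 2, ← Real.rpow_mul hnn]
        norm_num
    _ = (1 + 2*e*R*Real.cos (t*L) + R^2) ^ γ := by rw [hnormsq]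

private lemma integral_rademacher {Ω : Type} [MeasurableSpace Ω] (μ : Measure Ω)
    [IsProbabilityMeasure μ] (ε : Ω → ℝ) (hε : IsRademacherRV μ ε) (g : ℝ → ℝ) :
    ∫ ω, g (ε ω) ∂μ = (g 1 + g (-1))/2 := by
  obtain ⟨hm, h1, h2⟩ := hε
  have hA : MeasurableSet {ω | ε ω = 1} := hm (measurableSet_singleton 1)
  have hB : MeasurableSet {ω | ε ω = -1} := hm (measurableSet_singleton (-1))
  have hdisj : Disjoint {ω | ε ω = 1} {ω | ε ω = -1} := by
    rw [Set.disjoint_left]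
    intro ω hω1 hω2
    simp only [Set.mem_setOf_eq] at hω1 hω2
    rw [hω1] at hω2; norm_num at hω2
  have hunion : μ ({ω | ε ω = 1} ∪ {ω | ε ω = -1}) = 1 := by
    rw [measure_union hdisj hB, h1, h2, ENNReal.add_halves]
  have hcompl : μ ({ω | ε ω = 1} ∪ {ω | ε ω = -1})ᶜ = 0 := by
    rw [prob_compl_eq_one_sub (hA.union hB), hunion, tsub_self]
  have hae : ∀ᵐ ω ∂μ, g (ε ω)
      = Set.indicator {ω | ε ω = 1} (fun _ => g 1) ω
        + Set.indicator {ω | ε ω = -1} (fun _ => g (-1)) ω := by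
    refine Filter.eventually_of_mem (MeasureTheory.mem_ae_iff.2 hcompl) ?_
    intro ω hω
    rcases hω with hω | hω
    · have h1' : ω ∈ {ω | ε ω = 1} := hω
      have h2' : ω ∉ {ω | ε ω = -1} := by
        simp only [Set.mem_setOf_eq] at h1' ⊢
        rw [h1']; norm_num
      rw [Set.indicator_of_mem h1', Set.indicator_of_notMem h2']
      simp only [Set.mem_setOf_eq] at h1'
      rw [h1', add_zero]
    · have h1' : ω ∈ {ω | ε ω = -1} := hω
      have h2' : ω ∉ {ω | ε ω = 1} := by
        simp only [Set.mem_setOf_eq] at h1' ⊢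
        rw [h1']; norm_num
      rw [Set.indicator_of_mem h1', Set.indicator_of_notMem h2']
      simp only [Set.mem_setOf_eq] at h1'
      rw [h1', zero_add]
  rw [integral_congr_ae hae]
  rw [integral_add ((integrable_const (g 1)).indicator hA)
    ((integrable_const (g (-1))).indicator hB)]
  rw [integral_indicator_const (g 1) hA, integral_indicator_const (g (-1)) hB]
  rw [measureReal_def, measureReal_def, h1, h2]
  have : ((1:ℝ≥0∞)/2).toReal = (1/2 : ℝ) := by simp
  rw [this]
  simp only [smul_eq_mul]
  ring

set_option maxHeartbeats 1000000 in
/-- single-prime two-point estimate, Rademacher case. For a Rademacher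
random sign `f(p) = ε`, a prime `p ≥ 100(1 + max{α², β²})`, reals `α, β ≥ 0`, `σ` with
`|σ| ≤ 1/log p` and shifts `t₁, t₂`:
`E[|1 + f(p)p^{-(1/2+σ+it₁)}|^{2α} |1 + f(p)p^{-(1/2+σ+it₂)}|^{2β}]
 = exp((α² + β² + (α²-α)cos(2t₁ log p) + (β²-β)cos(2t₂ log p)
    + 2αβ(cos((t₁+t₂)log p) + cos((t₁-t₂)log p)))/p^{1+2σ}
    + O(max{α,β,α³,β³}/p^{3/2+3σ}))`. -/
theorem rademacher_single_prime_estimate :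
    ∃ C : ℝ, 0 < C ∧
      ∀ (Ω : Type) [MeasurableSpace Ω] (μ : Measure Ω), IsProbabilityMeasure μ →
      ∀ (ε : Ω → ℝ), IsRademacherRV μ ε →
      ∀ (p : ℕ) (α β σ t₁ t₂ : ℝ), p.Prime → 0 ≤ α → 0 ≤ β →
        100 * (1 + max (α ^ 2) (β ^ 2)) ≤ (p : ℝ) → |σ| ≤ 1 / Real.log p →
      ∃ E : ℝ,
        |E| ≤ C * max (max α β) (max (α ^ 3) (β ^ 3)) / (p : ℝ) ^ (3 / 2 + 3 * σ) ∧
        ∫ ω, ‖1 + (ε ω : ℂ) *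
                (p : ℂ) ^ (-(((1 / 2 + σ : ℝ) : ℂ) + Complex.I * (t₁ : ℂ)))‖ ^ (2 * α) *
              ‖1 + (ε ω : ℂ) *
                (p : ℂ) ^ (-(((1 / 2 + σ : ℝ) : ℂ) + Complex.I * (t₂ : ℂ)))‖ ^ (2 * β) ∂μ =
          Real.exp
            ((α ^ 2 + β ^ 2 + (α ^ 2 - α) * Real.cos (2 * t₁ * Real.log p) +
                (β ^ 2 - β) * Real.cos (2 * t₂ * Real.log p) +
                2 * α * β * (Real.cos ((t₁ + t₂) * Real.log p) +
                  Real.cos ((t₁ - t₂) * Real.log p))) / (p : ℝ) ^ (1 + 2 * σ) + E) := by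
  refine ⟨10000, by norm_num, ?_⟩
  intro Ω _ μ hμ ε hε p α β σ t₁ t₂ hp hα hβ hp100 hσ
  haveI := hμ
  have hmax0 : (0:ℝ) ≤ max (α^2) (β^2) := le_trans (sq_nonneg α) (le_max_left _ _)
  have hp0 : (0:ℝ) < (p:ℝ) := by
    have := hp.pos
    exact_mod_cast this
  have hp100' : (100:ℝ) ≤ (p:ℝ) := by nlinarith
  have hp1 : (1:ℝ) < (p:ℝ) := by linarith
  set L : ℝ := Real.log p with hL
  have hlogp : 0 < L := Real.log_pos hp1
  set r : ℝ := (p:ℝ) ^ (-(1/2+σ) : ℝ) with hr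
  have hr0 : 0 < r := Real.rpow_pos_of_pos hp0 _
  have hσL : -σ * L ≤ 1 := by
    have h1 : |σ| * L ≤ (1/L)*L := mul_le_mul_of_nonneg_right hσ hlogp.le
    have h2 : (1/L)*L = 1 := by field_simp
    have h3 : -σ ≤ |σ| := neg_le_abs σ
    have h4 : -σ * L ≤ |σ| * L := mul_le_mul_of_nonneg_right h3 hlogp.le
    linarith
  have hpσ : (p:ℝ)^(-σ:ℝ) ≤ Real.exp 1 := by
    rw [Real.rpow_def_of_pos hp0]
    apply Real.exp_le_exp.2
    calc L * -σ = -σ * L := by ring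
      _ ≤ 1 := hσL
  have hsplitr : r = (p:ℝ)^(-(1/2):ℝ) * (p:ℝ)^(-σ:ℝ) := by
    rw [hr, ← Real.rpow_add hp0]
    congr 1
    ring
  have hp12 : (p:ℝ)^(-(1/2):ℝ) = (Real.sqrt p)⁻¹ := by
    rw [Real.rpow_neg hp0.le, Real.sqrt_eq_rpow]
  have keyb : ∀ x : ℝ, 0 ≤ x → 100*x^2 ≤ (p:ℝ) → r * x ≤ 3/11 := by
    intro x hx hxp
    have hs : 10*x ≤ Real.sqrt p := Real.le_sqrt_of_sq_le (by nlinarith)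
    have hs0 : 0 < Real.sqrt p := Real.sqrt_pos.2 hp0
    have h1 : r * x = (p:ℝ)^(-σ:ℝ) * (x / Real.sqrt p) := by
      rw [hsplitr, hp12]
      field_simp
    rw [h1]
    have h2 : x / Real.sqrt p ≤ 1/10 := by
      rw [div_le_iff₀ hs0]; linarith
    have h3 : 0 ≤ x / Real.sqrt p := by positivity
    have he1 : Real.exp 1 ≤ 2.7182818286 := Real.exp_one_lt_d9.le
    calc (p:ℝ)^(-σ:ℝ) * (x/Real.sqrt p)
        ≤ Real.exp 1 * (1/10) := mul_le_mul hpσ h2 h3 (Real.exp_pos 1).le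
      _ ≤ 3/11 := by nlinarith [he1]
  have hr11 : r ≤ 3/11 := by
    have := keyb 1 (by norm_num) (by nlinarith)
    linarith
  have hrα : r * α ≤ 3/11 := by
    apply keyb α hα
    have : α^2 ≤ max (α^2) (β^2) := le_max_left _ _
    nlinarith
  have hrβ : r * β ≤ 3/11 := by
    apply keyb β hβ
    have : β^2 ≤ max (α^2) (β^2) := le_max_right _ _
    nlinarith
  set c₁ : ℝ := Real.cos (t₁ * L) with hc₁def
  set c₂ : ℝ := Real.cos (t₂ * L) with hc₂def
  have hc₁ : |c₁| ≤ 1 := Real.abs_cos_le_one _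
  have hc₂ : |c₂| ≤ 1 := Real.abs_cos_le_one _
  -- power identities
  have hr2' : r^2 = (p:ℝ)^(-(1+2*σ) : ℝ) := by
    rw [hr, ← Real.rpow_natCast ((p:ℝ)^(-(1/2+σ):ℝ)) 2, ← Real.rpow_mul hp0.le]
    congr 1
    push_cast
    ring
  have hr2 : ((p:ℝ)^(1+2*σ : ℝ))⁻¹ = r^2 := by
    rw [hr2', ← Real.rpow_neg hp0.le]
  have hr3' : r^3 = (p:ℝ)^(-(3/2+3*σ) : ℝ) := by
    rw [hr, ← Real.rpow_natCast ((p:ℝ)^(-(1/2+σ):ℝ)) 3, ← Real.rpow_mul hp0.le]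
    congr 1
    push_cast
    ring
  have hr3 : ((p:ℝ)^(3/2+3*σ : ℝ))⁻¹ = r^3 := by
    rw [hr3', ← Real.rpow_neg hp0.le]
  -- base positivity
  have hbase : ∀ c : ℝ, |c| ≤ 1 → 0 < 1+2*r*c+r^2 := by
    intro c hc
    have h1 := (abs_le.1 hc).1
    nlinarith [mul_nonneg hr0.le (by linarith : (0:ℝ) ≤ c+1),
      mul_pos (show (0:ℝ) < 1-r by linarith) (show (0:ℝ) < 1-r by linarith)]
  have hb1p := hbase c₁ hc₁
  have hb2p := hbase c₂ hc₂
  have hb1m : 0 < 1-2*r*c₁+r^2 := by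
    have := hbase (-c₁) (by rwa [abs_neg])
    nlinarith [this]
  have hb2m : 0 < 1-2*r*c₂+r^2 := by
    have := hbase (-c₂) (by rwa [abs_neg])
    nlinarith [this]
  set I : ℝ := ((1+2*r*c₁+r^2) ^ α * (1+2*r*c₂+r^2) ^ β
      + (1-2*r*c₁+r^2) ^ α * (1-2*r*c₂+r^2) ^ β) / 2 with hI
  have hIpos : 0 < I := by
    rw [hI]
    have p1 := Real.rpow_pos_of_pos hb1p α
    have p2 := Real.rpow_pos_of_pos hb2p β
    have p3 := Real.rpow_pos_of_pos hb1m α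
    have p4 := Real.rpow_pos_of_pos hb2m β
    positivity
  set T : ℝ := α+β+2*(α^2-α)*c₁^2+2*(β^2-β)*c₂^2+4*α*β*c₁*c₂ with hT
  refine ⟨Real.log I - r^2*T, ?_, ?_⟩
  · have hcore := core hα hβ hc₁ hc₂ hr0 hr11 hrα hrβ
    rw [← hI, ← hT] at hcore
    calc |Real.log I - r^2*T| ≤ 10000 * max (max α β) (max (α^3) (β^3)) * r^3 := hcore
      _ = 10000 * max (max α β) (max (α^3) (β^3)) / (p:ℝ)^(3/2+3*σ : ℝ) := by
          rw [div_eq_mul_inv, hr3]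
  · have hInt : (∫ ω, ‖1 + (ε ω : ℂ) *
          (p : ℂ) ^ (-(((1 / 2 + σ : ℝ) : ℂ) + Complex.I * (t₁ : ℂ)))‖ ^ (2 * α) *
        ‖1 + (ε ω : ℂ) *
          (p : ℂ) ^ (-(((1 / 2 + σ : ℝ) : ℂ) + Complex.I * (t₂ : ℂ)))‖ ^ (2 * β) ∂μ)
        = (‖1 + ((1:ℝ) : ℂ) *
            (p : ℂ) ^ (-(((1 / 2 + σ : ℝ) : ℂ) + Complex.I * (t₁ : ℂ)))‖ ^ (2 * α) *
          ‖1 + ((1:ℝ) : ℂ) *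
            (p : ℂ) ^ (-(((1 / 2 + σ : ℝ) : ℂ) + Complex.I * (t₂ : ℂ)))‖ ^ (2 * β)
          + ‖1 + ((-1:ℝ) : ℂ) *
            (p : ℂ) ^ (-(((1 / 2 + σ : ℝ) : ℂ) + Complex.I * (t₁ : ℂ)))‖ ^ (2 * α) *
          ‖1 + ((-1:ℝ) : ℂ) *
            (p : ℂ) ^ (-(((1 / 2 + σ : ℝ) : ℂ) + Complex.I * (t₂ : ℂ)))‖ ^ (2 * β))/2 :=
      integral_rademacher μ ε hε (fun e : ℝ =>
        ‖1 + (e : ℂ) * (p : ℂ) ^ (-(((1 / 2 + σ : ℝ) : ℂ) + Complex.I * (t₁ : ℂ)))‖ ^ (2 * α) *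
        ‖1 + (e : ℂ) * (p : ℂ) ^ (-(((1 / 2 + σ : ℝ) : ℂ) + Complex.I * (t₂ : ℂ)))‖ ^ (2 * β))
    rw [hInt, norm_term hp.pos σ t₁ 1 α (by norm_num),
      norm_term hp.pos σ t₂ 1 β (by norm_num),
      norm_term hp.pos σ t₁ (-1) α (by norm_num),
      norm_term hp.pos σ t₂ (-1) β (by norm_num), ← hr, ← hL, ← hc₁def, ← hc₂def]
    have hb1 : 1 + 2*1*r*c₁ + r^2 = 1+2*r*c₁+r^2 := by ring
    have hb2 : 1 + 2*1*r*c₂ + r^2 = 1+2*r*c₂+r^2 := by ring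
    have hb3 : 1 + 2*(-1)*r*c₁ + r^2 = 1-2*r*c₁+r^2 := by ring
    have hb4 : 1 + 2*(-1)*r*c₂ + r^2 = 1-2*r*c₂+r^2 := by ring
    rw [hb1, hb2, hb3, hb4, ← hI]
    have htrig : α^2+β^2+(α^2-α)*Real.cos (2*t₁*L) + (β^2-β)*Real.cos (2*t₂*L)
        + 2*α*β*(Real.cos ((t₁+t₂)*L) + Real.cos ((t₁-t₂)*L)) = T := by
      have h1 : Real.cos (2*t₁*L) = 2*c₁^2 - 1 := by
        rw [show 2*t₁*L = 2*(t₁*L) by ring, Real.cos_two_mul, hc₁def]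
      have h2 : Real.cos (2*t₂*L) = 2*c₂^2 - 1 := by
        rw [show 2*t₂*L = 2*(t₂*L) by ring, Real.cos_two_mul, hc₂def]
      have h3 : Real.cos ((t₁+t₂)*L) + Real.cos ((t₁-t₂)*L) = 2*c₁*c₂ := by
        rw [show (t₁+t₂)*L = t₁*L + t₂*L by ring, show (t₁-t₂)*L = t₁*L - t₂*L by ring,
          Real.cos_add, Real.cos_sub, hc₁def, hc₂def]
        ring
      rw [h1, h2, h3, hT]
      ring
    have harg : (α^2+β^2+(α^2-α)*Real.cos (2*t₁*L) + (β^2-β)*Real.cos (2*t₂*L)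
          + 2*α*β*(Real.cos ((t₁+t₂)*L) + Real.cos ((t₁-t₂)*L))) / (p:ℝ)^(1+2*σ : ℝ)
          + (Real.log I - r^2*T) = Real.log I := by
      rw [htrig, div_eq_mul_inv, hr2]
      ring
    rw [harg, Real.exp_log hIpos]
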